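/- Let y ∈ ℝⁿ, X_* ∈ ℝ^{n×p}, X₀ ∈ ℝ^{n×q₀}, X₁ ∈ ℝ^{n×q₁}, and let A ∈ ℝ^{m×q₁} be a constraint matrix acting on the coefficients of X₁ only. Let Q be a matrix whose columns form a basis of the null space {β₁ ∈ ℝ^{q₁} : A β₁ = 0}, and let H₀ be the orthogonal projection of ℝⁿ onto the column span of X₀. Assume [X_* X₀] and [X_* X₀ X₁Q] have full column rank, and assume the orthogonality condition X_*ᵀ (I − H₀) X₁ Q = 0. Let (β̂_*, β̂₀, β̂₁) minimize ‖y − X_* β_* − X₀ β₀ − X₁ β₁‖² subject to A β₁ = 0, and let (β̂_*^M, β̂₀^M) minimize ‖y − X_* β_* − X₀ β₀‖². Then β̂_*^M = β̂_*. -/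

import Mathlib

open Finset Matrix

lemma quad_aux (s c : ℝ) (hs : 0 ≤ s) (h : ∀ t : ℝ, 0 ≤ t^2 * s - 2*t*c) : c = 0 := by
  have h1 := h (c / (s + 1))
  have hs1 : (0:ℝ) < s + 1 := by linarith
  have hne : s + 1 ≠ 0 := ne_of_gt hs1
  have e : ((c/(s+1))^2 * s - 2*(c/(s+1))*c) * ((s+1)*(s+1)) = c^2*s - 2*c^2*(s+1) := by
    field_simp
  have h2 : 0 ≤ c^2*s - 2*c^2*(s+1) := by
    have := mul_nonneg h1 (mul_pos hs1 hs1).le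
    linarith [e ▸ this]
  nlinarith [sq_nonneg c]

lemma min_orth {n : ℕ} (r u : Fin n → ℝ)
    (h : ∀ t : ℝ, ∑ i, r i ^ 2 ≤ ∑ i, (r i - t * u i) ^ 2) :
    ∑ i, u i * r i = 0 := by
  apply quad_aux (∑ i, u i ^ 2) _ (Finset.sum_nonneg fun i _ => sq_nonneg _)
  intro t
  have expand : ∑ i, (r i - t * u i) ^ 2
      = ∑ i, r i ^ 2 + (t^2 * ∑ i, u i ^ 2 - 2*t*∑ i, u i * r i) := by
    rw [Finset.mul_sum, Finset.mul_sum, ← Finset.sum_sub_distrib, ← Finset.sum_add_distrib]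
    exact Finset.sum_congr rfl fun i _ => by ring
  have := h t
  rw [expand] at this
  linarith

lemma rank_inj {n : ℕ} {κ : Type*} [Fintype κ] [DecidableEq κ]
    (W : Matrix (Fin n) κ ℝ) (h : W.rank = Fintype.card κ)
    (v : κ → ℝ) (hv : W.mulVec v = 0) : v = 0 := by
  have h2 := LinearMap.finrank_range_add_finrank_ker (W.mulVecLin)
  rw [show Module.finrank ℝ (LinearMap.range W.mulVecLin) = W.rank from rfl, h] at h2
  have hcard : Module.finrank ℝ (κ → ℝ) = Fintype.card κ := Module.finrank_pi ℝ
  rw [hcard] at h2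
  have hker : Module.finrank ℝ (LinearMap.ker W.mulVecLin) = 0 := by omega
  have hbot : LinearMap.ker W.mulVecLin = ⊥ := Submodule.finrank_eq_zero.mp hker
  have hmem : v ∈ LinearMap.ker W.mulVecLin := by
    simpa [Matrix.mulVecLin] using hv
  rw [hbot] at hmem
  simpa using hmem

lemma sum_mulVec_orth {n : ℕ} {κ : Type*} [Fintype κ]
    (M : Matrix (Fin n) κ ℝ) (g : Fin n → ℝ) (hMg : Mᵀ.mulVec g = 0) (a : κ → ℝ) :
    ∑ i, M.mulVec a i * g i = 0 := by
  show (M.mulVec a) ⬝ᵥ g = 0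
  rw [dotProduct_comm, dotProduct_mulVec, ← Matrix.mulVec_transpose, hMg, zero_dotProduct]


/-- FWL-type invariance of a coefficient block with linearly
constrained added regressors.  The coefficients on `X₁` are constrained by
`A β₁ = 0`; the columns of `Q` form a basis of the null space of `A`.  If
`Xsᵀ (I − H₀) X₁ Q = 0`, where `H₀` is the orthogonal projection onto the column span
of `X₀`, and both (reparametrized) designs have full column rank, then the coefficient
block on `Xs` from the constrained regression including `X₁` equals the OLS coefficient
block on `Xs` from the regression without `X₁`. -/
theorem constrained_ols_block_invariance
    {n p q₀ q₁ m d : ℕ}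
    (y : Fin n → ℝ)
    (Xs : Matrix (Fin n) (Fin p) ℝ)
    (X₀ : Matrix (Fin n) (Fin q₀) ℝ)
    (X₁ : Matrix (Fin n) (Fin q₁) ℝ)
    (A : Matrix (Fin m) (Fin q₁) ℝ)
    -- the columns of Q form a basis of the null space of A
    (Q : Matrix (Fin q₁) (Fin d) ℝ)
    (hQspan : ∀ b1 : Fin q₁ → ℝ, A.mulVec b1 = 0 ↔ ∃ w : Fin d → ℝ, b1 = Q.mulVec w)
    (hQindep : ∀ w : Fin d → ℝ, Q.mulVec w = 0 → w = 0)
    -- H₀ is the orthogonal projection onto the column span of X₀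
    (H₀ : Matrix (Fin n) (Fin n) ℝ)
    (hH₀symm : H₀ᵀ = H₀)
    (hH₀idem : H₀ * H₀ = H₀)
    (hH₀fix : H₀ * X₀ = X₀)
    (hH₀range : ∀ v : Fin n → ℝ, ∃ w : Fin q₀ → ℝ, H₀.mulVec v = X₀.mulVec w)
    -- full column rank of the (reparametrized) designs
    (hrank1 : (Matrix.fromCols Xs X₀).rank = p + q₀)
    (hrank2 : (Matrix.fromCols (Matrix.fromCols Xs X₀) (X₁ * Q)).rank = p + q₀ + d)
    -- orthogonality condition
    (horth : Xsᵀ * (1 - H₀) * (X₁ * Q) = 0)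
    -- OLS estimates from the regression without X₁
    (βsM : Fin p → ℝ) (β₀M : Fin q₀ → ℝ)
    (hMmin : ∀ (bs : Fin p → ℝ) (b0 : Fin q₀ → ℝ),
      ∑ i : Fin n, (y i - (Xs.mulVec βsM i + X₀.mulVec β₀M i)) ^ 2 ≤
        ∑ i : Fin n, (y i - (Xs.mulVec bs i + X₀.mulVec b0 i)) ^ 2)
    -- constrained least-squares estimates from the regression including X₁
    (βs : Fin p → ℝ) (β₀ : Fin q₀ → ℝ) (β₁ : Fin q₁ → ℝ)
    (hconstr : A.mulVec β₁ = 0)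
    (hmin : ∀ (bs : Fin p → ℝ) (b0 : Fin q₀ → ℝ) (b1 : Fin q₁ → ℝ),
      A.mulVec b1 = 0 →
      ∑ i : Fin n, (y i - (Xs.mulVec βs i + X₀.mulVec β₀ i + X₁.mulVec β₁ i)) ^ 2 ≤
        ∑ i : Fin n, (y i - (Xs.mulVec bs i + X₀.mulVec b0 i + X₁.mulVec b1 i)) ^ 2) :
    βsM = βs := by
  -- residuals
  set r : Fin n → ℝ := fun i => y i - (Xs.mulVec βsM i + X₀.mulVec β₀M i) with hr_def
  set R : Fin n → ℝ := fun i => y i - (Xs.mulVec βs i + X₀.mulVec β₀ i + X₁.mulVec β₁ i)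
    with hR_def
  -- orthogonality of the small-model residual
  have hrXs : ∀ e : Fin p → ℝ, ∑ i, Xs.mulVec e i * r i = 0 := by
    intro e
    apply min_orth
    intro t
    have h := hMmin (βsM + t • e) β₀M
    have key : ∀ i, y i - (Xs.mulVec (βsM + t • e) i + X₀.mulVec β₀M i)
        = r i - t * Xs.mulVec e i := by
      intro i
      simp [hr_def, Matrix.mulVec_add, Matrix.mulVec_smul]
      ring
    simp only [key] at h
    exact h
  have hrX0 : ∀ e : Fin q₀ → ℝ, ∑ i, X₀.mulVec e i * r i = 0 := by
    intro e
    apply min_orth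
    intro t
    have h := hMmin βsM (β₀M + t • e)
    have key : ∀ i, y i - (Xs.mulVec βsM i + X₀.mulVec (β₀M + t • e) i)
        = r i - t * X₀.mulVec e i := by
      intro i
      simp [hr_def, Matrix.mulVec_add, Matrix.mulVec_smul]
      ring
    simp only [key] at h
    exact h
  -- orthogonality of the constrained-model residual
  have hRXs : ∀ e : Fin p → ℝ, ∑ i, Xs.mulVec e i * R i = 0 := by
    intro e
    apply min_orth
    intro t
    have h := hmin (βs + t • e) β₀ β₁ hconstr
    have key : ∀ i, y i - (Xs.mulVec (βs + t • e) i + X₀.mulVec β₀ i + X₁.mulVec β₁ i)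
        = R i - t * Xs.mulVec e i := by
      intro i
      simp [hR_def, Matrix.mulVec_add, Matrix.mulVec_smul]
      ring
    simp only [key] at h
    exact h
  have hRX0 : ∀ e : Fin q₀ → ℝ, ∑ i, X₀.mulVec e i * R i = 0 := by
    intro e
    apply min_orth
    intro t
    have h := hmin βs (β₀ + t • e) β₁ hconstr
    have key : ∀ i, y i - (Xs.mulVec βs i + X₀.mulVec (β₀ + t • e) i + X₁.mulVec β₁ i)
        = R i - t * X₀.mulVec e i := by
      intro i
      simp [hR_def, Matrix.mulVec_add, Matrix.mulVec_smul]
      ring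
    simp only [key] at h
    exact h
  have hRP : ∀ w' : Fin d → ℝ, ∑ i, (X₁ * Q).mulVec w' i * R i = 0 := by
    intro w'
    apply min_orth
    intro t
    have hc : A.mulVec (β₁ + t • Q.mulVec w') = 0 := by
      rw [Matrix.mulVec_add, Matrix.mulVec_smul, hconstr,
        (hQspan (Q.mulVec w')).mpr ⟨w', rfl⟩]
      simp
    have h := hmin βs β₀ (β₁ + t • Q.mulVec w') hc
    have key : ∀ i, y i - (Xs.mulVec βs i + X₀.mulVec β₀ i + X₁.mulVec (β₁ + t • Q.mulVec w') i)
        = R i - t * (X₁ * Q).mulVec w' i := by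
      intro i
      simp [hR_def, Matrix.mulVec_add, Matrix.mulVec_smul, ← Matrix.mulVec_mulVec]
      ring
    simp only [key] at h
    exact h
  -- decompose β₁ through Q, and project X₁Q w through H₀
  obtain ⟨w, hw⟩ := (hQspan β₁).mp hconstr
  obtain ⟨w₀, hw₀⟩ := hH₀range ((X₁ * Q).mulVec w)
  set g : Fin n → ℝ := (X₁ * Q).mulVec w - X₀.mulVec w₀ with hg_def
  have hgeq : g = ((1 - H₀) * (X₁ * Q)).mulVec w := by
    rw [← Matrix.mulVec_mulVec, Matrix.sub_mulVec, Matrix.one_mulVec, hw₀, hg_def]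
  have hXsg : Xsᵀ.mulVec g = 0 := by
    rw [hgeq, Matrix.mulVec_mulVec, ← Matrix.mul_assoc, horth, Matrix.zero_mulVec]
  have hX0H : X₀ᵀ * H₀ = X₀ᵀ := by
    have h := congrArg Matrix.transpose hH₀fix
    rwa [Matrix.transpose_mul, hH₀symm] at h
  have hX0g : X₀ᵀ.mulVec g = 0 := by
    rw [hgeq, Matrix.mulVec_mulVec, ← Matrix.mul_assoc, Matrix.mul_sub, Matrix.mul_one, hX0H,
      sub_self, Matrix.zero_mul, Matrix.zero_mulVec]
  -- the difference of residuals
  set a : Fin p → ℝ := βs - βsM with ha_def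
  set b : Fin q₀ → ℝ := (β₀ + w₀) - β₀M with hb_def
  set v : Fin n → ℝ := Xs.mulVec a + X₀.mulVec b with hv_def
  have hβ₁ : X₁.mulVec β₁ = (X₁ * Q).mulVec w := by rw [hw, Matrix.mulVec_mulVec]
  have hdiff : ∀ i, r i - R i = v i + g i := by
    intro i
    simp [hr_def, hR_def, hv_def, hg_def, ha_def, hb_def, hβ₁,
      Matrix.mulVec_add, Matrix.mulVec_sub]
    ring
  have hvg : ∑ i, v i * g i = 0 := by
    have h1 := sum_mulVec_orth Xs g hXsg a
    have h2 := sum_mulVec_orth X₀ g hX0g b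
    calc ∑ i, v i * g i = ∑ i, (Xs.mulVec a i * g i + X₀.mulVec b i * g i) :=
          Finset.sum_congr rfl fun i _ => by simp [hv_def]; ring
      _ = 0 := by rw [Finset.sum_add_distrib, h1, h2, add_zero]
  have hvr : ∑ i, v i * r i = 0 := by
    have h1 := hrXs a
    have h2 := hrX0 b
    calc ∑ i, v i * r i = ∑ i, (Xs.mulVec a i * r i + X₀.mulVec b i * r i) :=
          Finset.sum_congr rfl fun i _ => by simp [hv_def]; ring
      _ = 0 := by rw [Finset.sum_add_distrib, h1, h2, add_zero]
  have hvR : ∑ i, v i * R i = 0 := by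
    have h1 := hRXs a
    have h2 := hRX0 b
    calc ∑ i, v i * R i = ∑ i, (Xs.mulVec a i * R i + X₀.mulVec b i * R i) :=
          Finset.sum_congr rfl fun i _ => by simp [hv_def]; ring
      _ = 0 := by rw [Finset.sum_add_distrib, h1, h2, add_zero]
  have hv2 : ∑ i, v i ^ 2 = 0 := by
    calc ∑ i, v i ^ 2 = ∑ i, (v i * r i - v i * R i - v i * g i) :=
          Finset.sum_congr rfl fun i _ => by
            have h := hdiff i
            linear_combination (-v i) * h
      _ = 0 := by
          rw [Finset.sum_sub_distrib, Finset.sum_sub_distrib, hvr, hvR, hvg]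
          ring
  have hvz : v = 0 := by
    funext i
    have h := (Finset.sum_eq_zero_iff_of_nonneg (fun i _ => sq_nonneg (v i))).mp hv2 i
      (Finset.mem_univ i)
    exact (pow_eq_zero_iff two_ne_zero).mp h
  -- full column rank forces a = 0
  have hW : (Matrix.fromCols Xs X₀).mulVec (Sum.elim a b) = 0 := by
    rw [Matrix.fromCols_mulVec_sumElim, ← hv_def, hvz]
  have hab : Sum.elim a b = 0 := by
    apply rank_inj _ _ _ hW
    simp [hrank1]
  have ha : a = 0 := funext fun j => congrFun hab (Sum.inl j)
  funext j
  have := congrFun ha j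
  simp [ha_def] at this
  linarith [this]
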